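/- arXiv:2302.11601 — 8 statements merged into one kernel-verified Lean document; each statement's English description precedes it below -/
import Mathlib

section
/- Let r > 0, let S = {π/2 + 2πk : k ∈ ℤ}, let P_θ ∈ [0, 2π), let δ = infDist(P_θ, S), and let P_y, G_y ∈ ℝ satisfy G_y ≥ P_y + r·sin δ. Then there exists a function θ : ℝ → ℝ that is Lipschitz continuous with constant 1/r, satisfies θ(0) = P_θ, and satisfies P_y + ∫₀^{s_f} sin(θ(t)) dt = G_y for s_f = r·δ + (G_y − P_y − r·sin δ). -/
open Real

/-- The set of "straight up" headings `π/2 + 2πk`, `k ∈ ℤ`. -/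
def upSet : Set ℝ := {x : ℝ | ∃ k : ℤ, x = Real.pi / 2 + 2 * Real.pi * k}

lemma key (r : ℝ) (hr : 0 < r) (P c : ℝ) (hc : Real.sin c = 1) (P_y G_y : ℝ)
    (hG : G_y ≥ P_y + r * Real.sin |c - P|) :
    ∃ θ : ℝ → ℝ, LipschitzWith (Real.toNNReal (1 / r)) θ ∧ θ 0 = P ∧
      P_y + (∫ t in (0:ℝ)..(r * |c - P| + (G_y - P_y - r * Real.sin |c - P|)),
        Real.sin (θ t)) = G_y := by
  have hcos : Real.cos c = 0 := by nlinarith [Real.sin_sq_add_cos_sq c]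
  set e := c - P with he
  set δ := |e| with hδ
  set σ := Real.sign e with hσ
  have hδ0 : 0 ≤ δ := abs_nonneg _
  have hσe : σ * δ = c - P := by
    rw [← he]
    rcases lt_trichotomy e 0 with h | h | h
    · rw [hσ, hδ, Real.sign_of_neg h, abs_of_neg h]; ring
    · simp [hσ, hδ, h]
    · rw [hσ, hδ, Real.sign_of_pos h, abs_of_pos h]; ring
  have hσabs : |σ| ≤ 1 := by
    rcases Real.sign_apply_eq e with h | h | h <;> simp [hσ, h]
  have hrδ : 0 ≤ r * δ := mul_nonneg hr.le hδ0
  set θ : ℝ → ℝ := fun t => P + σ * (min (max t 0) (r * δ)) / r with hθ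
  have hsin : Real.sin δ = σ * Real.cos P := by
    rcases lt_trichotomy e 0 with h | h | h
    · rw [hδ, abs_of_neg h, hσ, Real.sign_of_neg h, he]
      rw [Real.sin_neg, Real.sin_sub, hc, hcos]; ring
    · simp [hδ, hσ, h]
    · rw [hδ, abs_of_pos h, hσ, Real.sign_of_pos h, he]
      rw [Real.sin_sub, hc, hcos]; ring
  have hL : 0 ≤ G_y - P_y - r * Real.sin δ := by linarith
  set L := G_y - P_y - r * Real.sin δ with hLdef
  have hlip : LipschitzWith (Real.toNNReal (1 / r)) θ := by
    apply LipschitzWith.of_dist_le_mul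
    intro a b
    simp only [hθ, Real.dist_eq]
    have h1 : |min (max a 0) (r * δ) - min (max b 0) (r * δ)| ≤ |a - b| := by
      refine (abs_min_sub_min_le_max _ _ _ _).trans ?_
      simp only [sub_self, abs_zero]
      refine max_le ((abs_max_sub_max_le_abs _ _ _).trans le_rfl) (by positivity)
    have h2 : P + σ * min (max a 0) (r * δ) / r - (P + σ * min (max b 0) (r * δ) / r)
        = σ / r * (min (max a 0) (r * δ) - min (max b 0) (r * δ)) := by ring
    rw [h2, abs_mul, Real.coe_toNNReal _ (by positivity)]
    have hle : |σ / r| ≤ 1 / r := by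
      rw [abs_div, abs_of_pos hr]
      gcongr
    exact mul_le_mul hle h1 (abs_nonneg _) (by positivity)
  have hθ0 : θ 0 = P := by
    simp [hθ, min_eq_left hrδ]
  refine ⟨θ, hlip, hθ0, ?_⟩
  have hcont : Continuous fun t => Real.sin (θ t) :=
    Real.continuous_sin.comp hlip.continuous
  have hsplit : (∫ t in (0:ℝ)..(r * δ + L), Real.sin (θ t))
      = (∫ t in (0:ℝ)..(r * δ), Real.sin (θ t))
        + ∫ t in (r * δ)..(r * δ + L), Real.sin (θ t) :=
    (intervalIntegral.integral_add_adjacent_intervals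
      (hcont.intervalIntegrable _ _) (hcont.intervalIntegrable _ _)).symm
  have hI1 : (∫ t in (0:ℝ)..(r * δ), Real.sin (θ t)) = r * Real.sin δ := by
    have heq : (∫ t in (0:ℝ)..(r * δ), Real.sin (θ t))
        = ∫ t in (0:ℝ)..(r * δ), Real.sin (P + σ * t / r) := by
      apply intervalIntegral.integral_congr
      intro t ht
      rw [Set.uIcc_of_le hrδ] at ht
      have h1 : max t 0 = t := max_eq_left ht.1
      have h2 : min t (r * δ) = t := min_eq_left ht.2
      simp [hθ, h1, h2]
    rw [heq]
    rcases eq_or_ne e 0 with h | h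
    · have : δ = 0 := by simp [hδ, h]
      simp [this]
    · have hσ2 : σ * σ = 1 := by
        rcases Real.sign_apply_eq_of_ne_zero e h with hs | hs <;> simp [hσ, hs]
      have hderiv : ∀ t ∈ Set.uIcc (0:ℝ) (r * δ),
          HasDerivAt (fun t => -(σ * r) * Real.cos (P + σ * t / r))
            (Real.sin (P + σ * t / r)) t := by
        intro t _
        have h1 : HasDerivAt (fun t : ℝ => P + σ * t / r) (σ / r) t := by
          have h0 : (fun t : ℝ => P + σ * t / r) = fun t : ℝ => P + (σ / r) * t := by
            funext u; ring
          rw [h0]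
          simpa using ((hasDerivAt_id t).const_mul (σ / r)).const_add P
        have hd := (h1.cos).const_mul (-(σ * r))
        have hval : -(σ * r) * (-Real.sin (P + σ * t / r) * (σ / r))
            = Real.sin (P + σ * t / r) := by
          field_simp
          linear_combination Real.sin ((r * P + σ * t) / r) * hσ2
        rw [hval] at hd
        exact hd
      rw [intervalIntegral.integral_eq_sub_of_hasDerivAt hderiv
        ((Real.continuous_sin.comp (by continuity)).intervalIntegrable _ _)]
      have harg : P + σ * (r * δ) / r = c := by
        field_simp
        linear_combination hσe
      rw [harg]
      simp only [mul_zero, zero_div, add_zero, hcos, mul_zero, neg_zero, zero_sub, neg_neg]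
      rw [hsin]
      ring
  have hI2 : (∫ t in (r * δ)..(r * δ + L), Real.sin (θ t)) = L := by
    have heq : (∫ t in (r * δ)..(r * δ + L), Real.sin (θ t))
        = ∫ t in (r * δ)..(r * δ + L), (1:ℝ) := by
      apply intervalIntegral.integral_congr
      intro t ht
      rw [Set.uIcc_of_le (by linarith)] at ht
      have h1 : max t 0 = t := max_eq_left (by linarith [ht.1])
      have h2 : min t (r * δ) = r * δ := min_eq_right ht.1
      have harg : P + σ * (r * δ) / r = c := by
        field_simp
        linear_combination hσe
      simp only [hθ, h1, h2, harg, hc]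
    rw [heq]; simp
  rw [hsplit, hI1, hI2]; ring

lemma upSet_infDist (P : ℝ) (hP : P ∈ Set.Ico (0 : ℝ) (2 * Real.pi)) :
    ∃ c : ℝ, Real.sin c = 1 ∧ Metric.infDist P upSet = |c - P| := by
  obtain ⟨hP0, hP2⟩ := hP
  have hπ := Real.pi_pos
  have hup : ∀ k : ℤ, (Real.pi / 2 + 2 * Real.pi * k) ∈ upSet := fun k => ⟨k, rfl⟩
  have hne : upSet.Nonempty := ⟨_, hup 0⟩
  by_cases hle : P ≤ 3 * Real.pi / 2
  · refine ⟨Real.pi / 2, Real.sin_pi_div_two, le_antisymm ?_ ?_⟩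
    · have h := Metric.infDist_le_dist_of_mem (x := P) (hup 0)
      simpa [Real.dist_eq, abs_sub_comm] using h
    · refine le_of_not_gt fun hlt => ?_
      rw [Metric.infDist_lt_iff hne] at hlt
      obtain ⟨y, ⟨k, rfl⟩, hy⟩ := hlt
      rw [Real.dist_eq] at hy
      have habs : |Real.pi / 2 - P| ≤ Real.pi := by
        rw [abs_sub_le_iff]; constructor <;> linarith
      rw [abs_lt] at hy
      rcases lt_trichotomy k 0 with hk | hk | hk
      · have hk' : (k : ℝ) ≤ -1 := by exact_mod_cast Int.le_sub_one_of_lt hk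
        have hm : 2 * Real.pi * (k : ℝ) ≤ -(2 * Real.pi) := by nlinarith
        linarith [hy.2, habs]
      · subst hk
        simp only [Int.cast_zero, mul_zero, add_zero] at hy
        rcases abs_cases (Real.pi / 2 - P) with ⟨h1, _⟩ | ⟨h1, _⟩ <;>
          linarith [hy.1, hy.2]
      · have hk' : (1 : ℝ) ≤ k := by exact_mod_cast hk
        have hm : 2 * Real.pi ≤ 2 * Real.pi * (k : ℝ) := by nlinarith
        linarith [hy.1, habs]
  · push_neg at hle
    refine ⟨Real.pi / 2 + 2 * Real.pi, ?_, le_antisymm ?_ ?_⟩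
    · rw [Real.sin_add_two_pi, Real.sin_pi_div_two]
    · have h := Metric.infDist_le_dist_of_mem (x := P) (hup 1)
      simpa [Real.dist_eq, abs_sub_comm] using h
    · refine le_of_not_gt fun hlt => ?_
      rw [Metric.infDist_lt_iff hne] at hlt
      obtain ⟨y, ⟨k, rfl⟩, hy⟩ := hlt
      rw [Real.dist_eq, abs_lt] at hy
      have habs : |Real.pi / 2 + 2 * Real.pi - P| = Real.pi / 2 + 2 * Real.pi - P := by
        rw [abs_of_pos]; linarith
      rw [habs] at hy
      rcases lt_trichotomy k 1 with hk | hk | hk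
      · have hk' : (k : ℝ) ≤ 0 := by exact_mod_cast Int.lt_add_one_iff.mp hk
        have hm : 2 * Real.pi * (k : ℝ) ≤ 0 := by nlinarith
        linarith [hy.2]
      · subst hk
        push_cast at hy
        linarith [hy.1]
      · have hk' : (2 : ℝ) ≤ k := by exact_mod_cast hk
        have hm : 2 * (2 * Real.pi) ≤ 2 * Real.pi * (k : ℝ) := by nlinarith
        linarith [hy.1]

theorem stmt_1 (r : ℝ) (hr : 0 < r) (P_θ : ℝ)
    (hPθ : P_θ ∈ Set.Ico (0 : ℝ) (2 * Real.pi))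
    (P_y G_y : ℝ)
    (hG : G_y ≥ P_y + r * Real.sin (Metric.infDist P_θ upSet)) :
    ∃ θ : ℝ → ℝ, LipschitzWith (Real.toNNReal (1 / r)) θ ∧ θ 0 = P_θ ∧
      P_y + (∫ t in (0:ℝ)..(r * Metric.infDist P_θ upSet +
          (G_y - P_y - r * Real.sin (Metric.infDist P_θ upSet))), Real.sin (θ t)) = G_y := by
  obtain ⟨c, hc, hd⟩ := upSet_infDist P_θ hPθ
  rw [hd] at hG ⊢
  exact key r hr P_θ c hc P_y G_y hG
end

section
/- Let r > 0, let θ : ℝ → ℝ be Lipschitz continuous with Lipschitz constant 1/r, let P_θ = θ(0) ∈ [π/2, π], let P_y, G_y ∈ ℝ, and set o_y = P_y − r·cos(P_θ). If G_y ≥ o_y, then for every s_f ≥ 0 with P_y + ∫₀^{s_f} sin(θ(t)) dt ≥ G_y, one has s_f ≥ r·(P_θ − π/2) + (G_y − o_y). -/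
open Real

theorem stmt_2 (r : ℝ) (hr : 0 < r) (θ : ℝ → ℝ)
    (hθ : LipschitzWith (Real.toNNReal (1 / r)) θ)
    (hPθ : θ 0 ∈ Set.Icc (Real.pi / 2) Real.pi)
    (P_y G_y : ℝ)
    (hG : G_y ≥ P_y - r * Real.cos (θ 0)) :
    ∀ s_f : ℝ, 0 ≤ s_f →
      P_y + ∫ t in (0:ℝ)..s_f, Real.sin (θ t) ≥ G_y →
      s_f ≥ r * (θ 0 - Real.pi / 2) + (G_y - (P_y - r * Real.cos (θ 0))) := by
  intro s_f hsf hreach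
  obtain ⟨c, hc⟩ : ∃ c : ℝ, c = θ 0 - π / 2 := ⟨_, rfl⟩
  have hπ := Real.pi_pos
  have hc0 : 0 ≤ c := by have := hPθ.1; linarith
  have hcpi : c ≤ π / 2 := by have := hPθ.2; linarith
  -- Lipschitz bound
  have hlip : ∀ t : ℝ, 0 ≤ t → |θ t - θ 0| ≤ t / r := by
    intro t ht
    have h := hθ.dist_le_mul t 0
    rw [Real.dist_eq, Real.dist_eq, sub_zero] at h
    have hco : ((Real.toNNReal (1 / r) : NNReal) : ℝ) = 1 / r :=
      Real.coe_toNNReal _ (by positivity)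
    rw [hco, abs_of_nonneg ht] at h
    calc |θ t - θ 0| ≤ 1 / r * t := h
      _ = t / r := by ring
  -- pointwise bound on [0, r*c]
  have hpt : ∀ t ∈ Set.Icc (0 : ℝ) (r * c), Real.sin (θ t) ≤ Real.sin (θ 0 - t / r) := by
    intro t ht
    obtain ⟨ht0, htc⟩ := ht
    have h1 := abs_le.mp (hlip t ht0)
    have htr : t / r ≤ c := by rw [div_le_iff₀ hr]; linarith [htc]
    have htr0 : 0 ≤ t / r := by positivity
    have e1 : Real.sin (θ t) = Real.cos (θ t - π / 2) := by
      rw [show θ t - π / 2 = -(π / 2 - θ t) by ring, Real.cos_neg, Real.cos_pi_div_two_sub]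
    have e2 : Real.sin (θ 0 - t / r) = Real.cos (c - t / r) := by
      rw [show θ 0 - t / r = π / 2 + (c - t / r) by rw [hc]; ring, Real.sin_add]
      simp
    rw [e1, e2]
    apply Real.cos_le_cos_of_nonneg_of_le_pi
    · linarith
    · have : θ t ≤ θ 0 + t / r := by linarith [h1.2]
      linarith [hc]
    · have : θ 0 - t / r ≤ θ t := by linarith [h1.1]
      linarith [hc]
  -- antiderivative computation
  have key : ∀ b : ℝ, (∫ t in (0:ℝ)..b, Real.sin (θ 0 - t / r)) =
      r * Real.cos (θ 0 - b / r) - r * Real.cos (θ 0) := by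
    intro b
    have hderiv : ∀ t : ℝ, HasDerivAt (fun t => r * Real.cos (θ 0 - t / r))
        (Real.sin (θ 0 - t / r)) t := by
      intro t
      have h1 : HasDerivAt (fun t : ℝ => θ 0 - t / r) (-(1 / r)) t := by
        simpa using ((hasDerivAt_id t).div_const r).const_sub (θ 0)
      have h2 := (Real.hasDerivAt_cos (θ 0 - t / r)).comp t h1
      have h3 := h2.const_mul r
      have h4 : r * (-Real.sin (θ 0 - t / r) * -(1 / r)) = Real.sin (θ 0 - t / r) := by
        rw [neg_mul_neg, ← mul_assoc, mul_comm r, mul_assoc, mul_one_div_cancel hr.ne', mul_one]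
      rw [h4] at h3
      exact h3
    have hcont : Continuous fun t : ℝ => Real.sin (θ 0 - t / r) :=
      Real.continuous_sin.comp (by continuity)
    rw [intervalIntegral.integral_eq_sub_of_hasDerivAt (fun t _ => hderiv t)
      (hcont.intervalIntegrable 0 b)]
    simp
  have hcontθ : Continuous fun t => Real.sin (θ t) := Real.continuous_sin.comp hθ.continuous
  have hint1 : ∀ a b : ℝ, IntervalIntegrable (fun t => Real.sin (θ t)) MeasureTheory.volume a b :=
    fun a b => hcontθ.intervalIntegrable a b
  have hint2 : ∀ a b : ℝ, IntervalIntegrable (fun t => Real.sin (θ 0 - t / r))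
      MeasureTheory.volume a b :=
    fun a b => (Real.continuous_sin.comp (by continuity)).intervalIntegrable a b
  have hrc0 : 0 ≤ r * c := by positivity
  rcases le_or_gt (r * c) s_f with hle | hlt
  · -- long case: split the integral
    have hsplit : (∫ t in (0:ℝ)..s_f, Real.sin (θ t)) =
        (∫ t in (0:ℝ)..(r * c), Real.sin (θ t)) +
        ∫ t in (r * c)..s_f, Real.sin (θ t) :=
      (intervalIntegral.integral_add_adjacent_intervals (hint1 0 (r * c)) (hint1 (r * c) s_f)).symm
    have h1 : (∫ t in (0:ℝ)..(r * c), Real.sin (θ t)) ≤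
        ∫ t in (0:ℝ)..(r * c), Real.sin (θ 0 - t / r) :=
      intervalIntegral.integral_mono_on hrc0 (hint1 0 (r * c)) (hint2 0 (r * c)) hpt
    have h1' : (∫ t in (0:ℝ)..(r * c), Real.sin (θ 0 - t / r)) = - (r * Real.cos (θ 0)) := by
      rw [key (r * c)]
      have : θ 0 - r * c / r = π / 2 := by field_simp [hc]; rw [hc]; ring
      rw [this, Real.cos_pi_div_two]; ring
    have h2 : (∫ t in (r * c)..s_f, Real.sin (θ t)) ≤ ∫ t in (r * c)..s_f, (1 : ℝ) :=
      intervalIntegral.integral_mono_on hle (hint1 (r * c) s_f)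
        (intervalIntegrable_const) (fun t _ => Real.sin_le_one _)
    have h2' : (∫ t in (r * c)..s_f, (1 : ℝ)) = s_f - r * c := by simp
    rw [hsplit] at hreach
    rw [h1'] at h1
    rw [h2'] at h2
    have hrc : r * (θ 0 - π / 2) = r * c := by rw [hc]
    linarith
  · -- short case: contradiction
    exfalso
    have hpt' : ∀ t ∈ Set.Icc (0 : ℝ) s_f, Real.sin (θ t) ≤ Real.sin (θ 0 - t / r) := by
      intro t ht
      exact hpt t ⟨ht.1, le_trans ht.2 (le_of_lt hlt)⟩
    have h1 : (∫ t in (0:ℝ)..s_f, Real.sin (θ t)) ≤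
        ∫ t in (0:ℝ)..s_f, Real.sin (θ 0 - t / r) :=
      intervalIntegral.integral_mono_on hsf (hint1 0 s_f) (hint2 0 s_f) hpt'
    rw [key s_f] at h1
    have hcosX : 0 ≤ Real.cos (θ 0 - s_f / r) := by
      nlinarith [hreach, hG, h1]
    have hXlt : π / 2 < θ 0 - s_f / r := by
      have : s_f / r < c := by rw [div_lt_iff₀ hr]; linarith
      linarith [hc]
    have hXub : θ 0 - s_f / r < π + π / 2 := by
      have := hPθ.2
      have : θ 0 - s_f / r ≤ θ 0 := by
        have : 0 ≤ s_f / r := by positivity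
        linarith
      linarith [hPθ.2]
    have := Real.cos_neg_of_pi_div_two_lt_of_lt hXlt hXub
    linarith
end

section
/- Let r > 0, let θ : ℝ → ℝ be Lipschitz continuous with Lipschitz constant 1/r, let P_θ = θ(0) ∈ [π/2, π], let P_y, G_y ∈ ℝ, and set o_y = P_y − r·cos(P_θ). If P_y ≤ G_y < o_y, then for every s_f ≥ 0 with P_y + ∫₀^{s_f} sin(θ(t)) dt ≥ G_y, one has s_f ≥ r·(P_θ − π + arccos((o_y − G_y)/r)). -/
open Real

theorem stmt_3 (r : ℝ) (hr : 0 < r) (θ : ℝ → ℝ)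
    (hθ : LipschitzWith (Real.toNNReal (1 / r)) θ)
    (hPθ : θ 0 ∈ Set.Icc (Real.pi / 2) Real.pi)
    (P_y G_y : ℝ)
    (hG1 : P_y ≤ G_y) (hG2 : G_y < P_y - r * Real.cos (θ 0)) :
    ∀ s_f : ℝ, 0 ≤ s_f →
      P_y + ∫ t in (0:ℝ)..s_f, Real.sin (θ t) ≥ G_y →
      s_f ≥ r * (θ 0 - Real.pi +
        Real.arccos (((P_y - r * Real.cos (θ 0)) - G_y) / r)) := by
  intro s_f hs hy
  set φ := θ 0 with hφdef
  obtain ⟨hφ1, hφ2⟩ := hPθ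
  set c : ℝ := ((P_y - r * Real.cos φ) - G_y) / r with hcdef
  have hc0 : 0 < c := div_pos (by linarith) hr
  have hcosφ : Real.cos φ ≤ 0 :=
    Real.cos_nonpos_of_pi_div_two_le_of_le hφ1 (by linarith [Real.pi_pos])
  have hc1 : c ≤ -Real.cos φ := by
    rw [hcdef, div_le_iff₀ hr]
    nlinarith
  have hc1' : c ≤ 1 := le_trans hc1 (by nlinarith [Real.neg_one_le_cos φ])
  have harc0 : 0 ≤ Real.arccos c := Real.arccos_nonneg c
  have harc2 : Real.arccos c ≤ Real.pi / 2 := Real.arccos_le_pi_div_two.mpr hc0.le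
  have hcosarc : Real.cos (Real.arccos c) = c := Real.cos_arccos (by linarith) hc1'
  by_contra hcon
  push_neg at hcon
  have hT : s_f / r < φ - Real.pi + Real.arccos c := by
    rw [div_lt_iff₀ hr]; linarith
  have hθcont : Continuous θ := hθ.continuous
  -- pointwise bound
  have hbound : ∀ t ∈ Set.Icc (0:ℝ) s_f, Real.sin (θ t) ≤ Real.sin (φ - t / r) := by
    intro t ht
    obtain ⟨ht0, hts⟩ := ht
    have hdist : |θ t - φ| ≤ t / r := by
      have h := hθ.dist_le_mul t 0
      rw [Real.dist_eq, Real.dist_eq, sub_zero] at h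
      have hcoe : ((Real.toNNReal (1 / r)) : ℝ) = 1 / r :=
        Real.coe_toNNReal _ (by positivity)
      rw [hcoe, abs_of_nonneg ht0] at h
      calc |θ t - φ| ≤ 1 / r * t := h
        _ = t / r := by ring
    obtain ⟨hd1, hd2⟩ := abs_le.mp hdist
    have htr : t / r ≤ s_f / r := by gcongr
    have htr' : t / r < φ - Real.pi + Real.arccos c := lt_of_le_of_lt htr hT
    have hmid : Real.pi / 2 ≤ φ - t / r := by linarith [Real.pi_pos]
    have htop : θ t ≤ 3 * Real.pi / 2 := by linarith
    have e1 : Real.sin (θ t) = Real.cos (θ t - Real.pi / 2) := by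
      rw [← Real.cos_pi_div_two_sub, ← Real.cos_neg]; ring_nf
    have e2 : Real.sin (φ - t / r) = Real.cos (φ - t / r - Real.pi / 2) := by
      rw [← Real.cos_pi_div_two_sub, ← Real.cos_neg]; ring_nf
    rw [e1, e2]
    exact Real.cos_le_cos_of_nonneg_of_le_pi (by linarith) (by linarith) (by linarith)
  -- integral computation
  have hintg : ∫ t in (0:ℝ)..s_f, Real.sin (φ - t / r)
      = r * Real.cos (φ - s_f / r) - r * Real.cos φ := by
    have hderiv : ∀ t ∈ Set.uIcc (0:ℝ) s_f,
        HasDerivAt (fun u => r * Real.cos (φ - u / r)) (Real.sin (φ - t / r)) t := by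
      intro t _
      have h1 : HasDerivAt (fun u : ℝ => φ - u / r) (-(1 / r)) t := by
        simpa using ((hasDerivAt_id t).div_const r).const_sub φ
      have h2 := (Real.hasDerivAt_cos (φ - t / r)).comp t h1
      have h3 := h2.const_mul r
      convert h3 using 1
      case e'_9 => linear_combination (-(Real.sin (φ - t / r))) * (mul_one_div_cancel hr.ne')
      all_goals rfl
    have hcont : IntervalIntegrable (fun t => Real.sin (φ - t / r))
        MeasureTheory.volume 0 s_f := by
      exact (Real.continuous_sin.comp (continuous_const.sub (continuous_id.div_const r))).intervalIntegrable _ _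
    rw [intervalIntegral.integral_eq_sub_of_hasDerivAt hderiv hcont]
    simp
  -- integral monotonicity
  have hmono : ∫ t in (0:ℝ)..s_f, Real.sin (θ t)
      ≤ ∫ t in (0:ℝ)..s_f, Real.sin (φ - t / r) := by
    apply intervalIntegral.integral_mono_on hs
    · exact ((Real.continuous_sin.comp hθcont).intervalIntegrable _ _)
    · exact ((Real.continuous_sin.comp (continuous_const.sub (continuous_id.div_const r))).intervalIntegrable _ _)
    · exact hbound
  -- strict cos comparison
  have hcoslt : Real.cos (φ - s_f / r) < -c := by
    have hkey : Real.pi - Real.arccos c < φ - s_f / r := by linarith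
    have h1 : 0 ≤ Real.pi - Real.arccos c := by linarith [Real.pi_pos]
    have h2 : φ - s_f / r ≤ Real.pi := by
      have : 0 ≤ s_f / r := by positivity
      linarith
    have := Real.cos_lt_cos_of_nonneg_of_le_pi h1 h2 hkey
    rwa [Real.cos_pi_sub, hcosarc] at this
  have hcfin : r * c = (P_y - r * Real.cos φ) - G_y := by
    rw [hcdef]; field_simp
  have hmul : r * Real.cos (φ - s_f / r) < r * (-c) := by
    exact mul_lt_mul_of_pos_left hcoslt hr
  have : r * (-c) = -(r * c) := by ring
  linarith [hmono, hy]
end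

section
/- Let r > 0, P_θ ∈ [π/2, π], P_y, G_y ∈ ℝ, and set o_y = P_y − r·cos(P_θ). If P_y ≤ G_y < o_y, then the heading function θ(s) = P_θ − s/r (which is Lipschitz with constant 1/r) satisfies P_y + ∫₀^{s_f} sin(θ(t)) dt = G_y for s_f = r·(P_θ − π + arccos((o_y − G_y)/r)), and s_f ≥ 0. -/
open Real

theorem stmt_4 (r : ℝ) (hr : 0 < r) (P_θ : ℝ)
    (hPθ : P_θ ∈ Set.Icc (Real.pi / 2) Real.pi)
    (P_y G_y : ℝ)
    (hG1 : P_y ≤ G_y) (hG2 : G_y < P_y - r * Real.cos P_θ) :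
    LipschitzWith (Real.toNNReal (1 / r)) (fun s : ℝ => P_θ - s / r) ∧
    P_y + (∫ t in (0:ℝ)..(r * (P_θ - Real.pi +
        Real.arccos (((P_y - r * Real.cos P_θ) - G_y) / r))),
        Real.sin (P_θ - t / r)) = G_y ∧
    0 ≤ r * (P_θ - Real.pi +
        Real.arccos (((P_y - r * Real.cos P_θ) - G_y) / r)) := by
  obtain ⟨hθ1, hθ2⟩ := hPθ
  set x : ℝ := ((P_y - r * Real.cos P_θ) - G_y) / r with hx
  have hcosle : Real.cos P_θ ≤ 0 := by
    have := Real.cos_nonpos_of_pi_div_two_le_of_le hθ1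
      (by linarith [Real.pi_pos])
    exact this
  have hxpos : 0 < x := div_pos (by linarith) hr
  have hxle : x ≤ -Real.cos P_θ := by
    rw [div_le_iff₀ hr]
    nlinarith
  have hxle1 : x ≤ 1 := by
    have := Real.neg_one_le_cos P_θ
    linarith
  -- arccos x ≥ π - P_θ
  have harc : Real.pi - P_θ ≤ Real.arccos x := by
    have h1 : Real.arccos (-Real.cos P_θ) ≤ Real.arccos x := by
      rw [Real.arccos, Real.arccos]
      have := Real.monotone_arcsin hxle
      linarith
    have h2 : Real.arccos (-Real.cos P_θ) = Real.pi - P_θ := by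
      rw [← Real.cos_pi_sub, Real.arccos_cos (by linarith) (by linarith [Real.pi_pos])]
    linarith
  have hsf : 0 ≤ P_θ - Real.pi + Real.arccos x := by linarith
  refine ⟨?_, ?_, by positivity⟩
  · apply LipschitzWith.of_dist_le_mul
    intro a b
    simp only [Real.dist_eq]
    have : P_θ - a / r - (P_θ - b / r) = (b - a) / r := by ring
    rw [this, abs_div, abs_of_pos hr]
    rw [Real.coe_toNNReal _ (by positivity)]
    rw [abs_sub_comm]
    rw [div_le_iff₀ hr]
    field_simp
    exact le_rfl
  · have hI : (∫ t in (0:ℝ)..(r * (P_θ - Real.pi + Real.arccos x)),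
        Real.sin (P_θ - t / r)) =
        r * (Real.cos (P_θ - (r * (P_θ - Real.pi + Real.arccos x)) / r)
          - Real.cos P_θ) := by
      have h := intervalIntegral.inv_mul_integral_comp_sub_div (f := Real.sin) (a := (0:ℝ))
        (b := r * (P_θ - Real.pi + Real.arccos x)) (c := r) (d := P_θ)
      have hrne : r ≠ 0 := ne_of_gt hr
      have := congrArg (fun y => r * y) h
      simp only [← mul_assoc, mul_inv_cancel₀ hrne, one_mul] at this
      rw [this, integral_sin]
      ring_nf
    rw [hI]
    have hcancel : P_θ - (r * (P_θ - Real.pi + Real.arccos x)) / r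
        = Real.pi - Real.arccos x := by
      field_simp
      ring
    rw [hcancel, Real.cos_pi_sub, Real.cos_arccos (by linarith) hxle1]
    have : r * x = (P_y - r * Real.cos P_θ) - G_y := by
      rw [hx]; field_simp
    nlinarith [this]
end

section
/- Let r > 0, let θ : ℝ → ℝ be Lipschitz continuous with Lipschitz constant 1/r, let P_θ = θ(0) ∈ [π/2, π], let P_y ∈ ℝ, and set o_y = P_y − r·cos(P_θ). Then for every s ∈ [0, r·(P_θ − π/2)], P_y + ∫₀^{s} sin(θ(t)) dt ≤ o_y + r·cos(P_θ − s/r). -/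
open Real

theorem stmt_6 (r : ℝ) (hr : 0 < r) (θ : ℝ → ℝ)
    (hθ : LipschitzWith (Real.toNNReal (1 / r)) θ)
    (hPθ : θ 0 ∈ Set.Icc (Real.pi / 2) Real.pi)
    (P_y : ℝ) :
    ∀ s ∈ Set.Icc (0 : ℝ) (r * (θ 0 - Real.pi / 2)),
      P_y + (∫ t in (0:ℝ)..s, Real.sin (θ t)) ≤
        (P_y - r * Real.cos (θ 0)) + r * Real.cos (θ 0 - s / r) := by
  intro s hs
  obtain ⟨hs0, hs1⟩ := hs
  obtain ⟨hP1, hP2⟩ := hPθ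
  have hθcont : Continuous θ := hθ.continuous
  have key : (∫ t in (0:ℝ)..s, Real.sin (θ t)) ≤
      ∫ t in (0:ℝ)..s, Real.sin (θ 0 - t / r) := by
    apply intervalIntegral.integral_mono_on hs0
    · exact (Real.continuous_sin.comp hθcont).intervalIntegrable _ _
    · exact ((Real.continuous_sin.comp (by continuity))).intervalIntegrable _ _
    · intro t ht
      obtain ⟨ht0, hts⟩ := ht
      have hd : |θ t - θ 0| ≤ t / r := by
        have h := hθ.dist_le_mul t 0
        rw [Real.dist_eq, Real.dist_eq, sub_zero, abs_of_nonneg ht0] at h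
        have hc : ((Real.toNNReal (1 / r)) : ℝ) = 1 / r :=
          Real.coe_toNNReal _ (by positivity)
        rw [hc] at h
        calc |θ t - θ 0| ≤ 1 / r * t := h
          _ = t / r := by ring
      have h1 : θ 0 - t / r ≤ θ t := by linarith [(abs_le.mp hd).1]
      have h2 : θ t ≤ θ 0 + t / r := by linarith [(abs_le.mp hd).2]
      have htr : t / r ≤ θ 0 - π / 2 := by
        rw [div_le_iff₀ hr]
        nlinarith [le_trans hts hs1]
      rw [← Real.cos_sub_pi_div_two (θ t), ← Real.cos_sub_pi_div_two (θ 0 - t / r)]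
      apply Real.cos_le_cos_of_nonneg_of_le_pi
      · linarith
      · linarith
      · linarith
  have hint : (∫ t in (0:ℝ)..s, Real.sin (θ 0 - t / r)) =
      r * Real.cos (θ 0 - s / r) - r * Real.cos (θ 0) := by
    have hder : ∀ t ∈ Set.uIcc (0:ℝ) s,
        HasDerivAt (fun u => r * Real.cos (θ 0 - u / r)) (Real.sin (θ 0 - t / r)) t := by
      intro t _
      have h : HasDerivAt (fun u => θ 0 - u / r) (-(1 / r)) t := by
        simpa using ((hasDerivAt_id t).div_const r).const_sub (θ 0)
      have h2 := h.cos.const_mul r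
      convert h2 using 1
      rotate_right
      · rw [neg_mul_neg, mul_comm (Real.sin _), ← mul_assoc, mul_one_div_cancel hr.ne', one_mul]
      all_goals rfl
    rw [intervalIntegral.integral_eq_sub_of_hasDerivAt hder
      (((Real.continuous_sin.comp (by continuity))).intervalIntegrable _ _)]
    simp
  linarith
end

section
/- Let r > 0, let S = {π/2 + 2πk : k ∈ ℤ}, and let θ : ℝ → ℝ be Lipschitz continuous with Lipschitz constant 1/r. Let δ = infDist(θ(0), S). Then for every s ≥ 0, sin(θ(s)) ≤ cos(max(0, δ − s/r)). -/
open Real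

lemma upSet_mem (k : ℤ) : (Real.pi / 2 + 2 * Real.pi * k) ∈ upSet := ⟨k, rfl⟩

lemma abs_t_le_pi (x : ℝ) :
    |x - Real.pi / 2 - 2 * Real.pi * round ((x - Real.pi / 2) / (2 * Real.pi))| ≤ Real.pi := by
  set k : ℤ := round ((x - Real.pi / 2) / (2 * Real.pi))
  have h2 : |(x - Real.pi / 2) / (2 * Real.pi) - k| ≤ 1 / 2 := abs_sub_round _
  have hπ := Real.pi_pos
  have heq : x - Real.pi / 2 - 2 * Real.pi * k
      = ((x - Real.pi / 2) / (2 * Real.pi) - k) * (2 * Real.pi) := by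
    field_simp
  rw [heq, abs_mul, abs_of_pos (by linarith : (0:ℝ) < 2 * Real.pi)]
  have h3 := mul_le_mul_of_nonneg_right h2 (by linarith : (0:ℝ) ≤ 2 * Real.pi)
  linarith

lemma infDist_le_abs_t (x : ℝ) :
    Metric.infDist x upSet
      ≤ |x - Real.pi / 2 - 2 * Real.pi * round ((x - Real.pi / 2) / (2 * Real.pi))| := by
  set k : ℤ := round ((x - Real.pi / 2) / (2 * Real.pi))
  have h := Metric.infDist_le_dist_of_mem (x := x) (upSet_mem k)
  rw [Real.dist_eq] at h
  convert h using 2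
  ring

lemma infDist_upSet_le_pi (x : ℝ) : Metric.infDist x upSet ≤ Real.pi :=
  (infDist_le_abs_t x).trans (abs_t_le_pi x)

lemma sin_le_cos_infDist (x : ℝ) : Real.sin x ≤ Real.cos (Metric.infDist x upSet) := by
  set k : ℤ := round ((x - Real.pi / 2) / (2 * Real.pi))
  set t : ℝ := x - Real.pi / 2 - 2 * Real.pi * k with ht_def
  have ht : |t| ≤ Real.pi := abs_t_le_pi x
  have hd : Metric.infDist x upSet ≤ |t| := infDist_le_abs_t x
  have hsin : Real.sin x = Real.cos |t| := by
    rw [Real.cos_abs, ht_def,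
      show x - Real.pi / 2 - 2 * Real.pi * k = (x - Real.pi / 2) - k * (2 * Real.pi) by ring,
      Real.cos_sub_int_mul_two_pi,
      show x - Real.pi / 2 = -(Real.pi / 2 - x) by ring, Real.cos_neg,
      Real.cos_pi_div_two_sub]
  rw [hsin]
  exact Real.cos_le_cos_of_nonneg_of_le_pi Metric.infDist_nonneg ht hd

theorem stmt_8 (r : ℝ) (hr : 0 < r) (θ : ℝ → ℝ)
    (hθ : LipschitzWith (Real.toNNReal (1 / r)) θ) :
    ∀ s : ℝ, 0 ≤ s →
      Real.sin (θ s) ≤ Real.cos (max 0 (Metric.infDist (θ 0) upSet - s / r)) := by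
  intro s hs
  set δ := Metric.infDist (θ 0) upSet
  set d := Metric.infDist (θ s) upSet
  have hdist : dist (θ 0) (θ s) ≤ s / r := by
    have h := hθ.dist_le_mul 0 s
    rw [Real.coe_toNNReal _ (by positivity)] at h
    have : dist (0:ℝ) s = s := by rw [Real.dist_eq, abs_of_nonpos (by linarith)]; linarith
    rw [this] at h
    calc dist (θ 0) (θ s) ≤ 1 / r * s := h
      _ = s / r := by ring
  have hδd : δ ≤ d + s / r :=
    (Metric.infDist_le_infDist_add_dist).trans (by linarith)
  have hmd : max 0 (δ - s / r) ≤ d := max_le Metric.infDist_nonneg (by linarith)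
  have hdπ : d ≤ Real.pi := infDist_upSet_le_pi _
  have := sin_le_cos_infDist (θ s)
  have hcc : Real.cos d ≤ Real.cos (max 0 (δ - s / r)) :=
    Real.cos_le_cos_of_nonneg_of_le_pi (le_max_left _ _) hdπ hmd
  linarith
end

section
/- Let r > 0, let S = {π/2 + 2πk : k ∈ ℤ}, and let θ : ℝ → ℝ be Lipschitz continuous with Lipschitz constant 1/r. Let δ = infDist(θ(0), S). Then for every s_f ≥ r·δ, ∫₀^{s_f} sin(θ(t)) dt ≤ r·sin δ + (s_f − r·δ). -/
open Real

lemma upSet_key (x : ℝ) : ∃ k : ℤ, |x - Real.pi / 2 - 2 * Real.pi * k| ≤ Real.pi := by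
  have hπ : (0:ℝ) < 2 * Real.pi := by positivity
  refine ⟨toIocDiv hπ (-Real.pi) (x - Real.pi / 2), ?_⟩
  have hmem := toIocMod_mem_Ioc hπ (-Real.pi) (x - Real.pi / 2)
  rw [toIocMod] at hmem
  obtain ⟨h1, h2⟩ := hmem
  rw [abs_le]
  simp only [zsmul_eq_mul] at h1 h2
  constructor <;> nlinarith [h1, h2]

lemma sin_le_cos_of_infDist (x d : ℝ) (hd0 : 0 ≤ d) (hdπ : d ≤ Real.pi)
    (hd : d ≤ Metric.infDist x upSet) : Real.sin x ≤ Real.cos d := by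
  obtain ⟨k, hk⟩ := upSet_key x
  set u := x - Real.pi / 2 - 2 * Real.pi * k with hu
  have hmem : (Real.pi / 2 + 2 * Real.pi * k) ∈ upSet := ⟨k, rfl⟩
  have hle : Metric.infDist x upSet ≤ |u| := by
    have := Metric.infDist_le_dist_of_mem (x := x) hmem
    rwa [Real.dist_eq, show x - (Real.pi / 2 + 2 * Real.pi * k) = u by rw [hu]; ring] at this
  have hsin : Real.sin x = Real.cos |u| := by
    rw [Real.cos_abs]
    have : x = u + k * (2 * Real.pi) + Real.pi / 2 := by rw [hu]; push_cast; ring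
    rw [this, Real.sin_add_pi_div_two, Real.cos_add_int_mul_two_pi]
  rw [hsin]
  exact Real.cos_le_cos_of_nonneg_of_le_pi hd0 hk (le_trans hd hle)

theorem stmt_9 (r : ℝ) (hr : 0 < r) (θ : ℝ → ℝ)
    (hθ : LipschitzWith (Real.toNNReal (1 / r)) θ) :
    ∀ s_f : ℝ, r * Metric.infDist (θ 0) upSet ≤ s_f →
      (∫ t in (0:ℝ)..s_f, Real.sin (θ t)) ≤
        r * Real.sin (Metric.infDist (θ 0) upSet) +
          (s_f - r * Metric.infDist (θ 0) upSet) := by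
  intro s_f hsf
  set δ := Metric.infDist (θ 0) upSet with hδ
  have hδ0 : 0 ≤ δ := Metric.infDist_nonneg
  have hδπ : δ ≤ Real.pi := by
    obtain ⟨k, hk⟩ := upSet_key (θ 0)
    have hmem : (Real.pi / 2 + 2 * Real.pi * k) ∈ upSet := ⟨k, rfl⟩
    have := Metric.infDist_le_dist_of_mem (x := θ 0) hmem
    rw [Real.dist_eq] at this
    calc δ ≤ |θ 0 - (Real.pi / 2 + 2 * Real.pi * k)| := this
      _ ≤ Real.pi := by
        rwa [show θ 0 - (Real.pi / 2 + 2 * Real.pi * k)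
          = θ 0 - Real.pi / 2 - 2 * Real.pi * k by ring]
  have hcontθ : Continuous fun t => Real.sin (θ t) :=
    Real.continuous_sin.comp hθ.continuous
  have hcontc : Continuous fun t => Real.cos (δ - t / r) := by continuity
  have hrδ : 0 ≤ r * δ := by positivity
  -- pointwise bound on [0, r*δ]
  have hpt : ∀ t ∈ Set.Icc (0:ℝ) (r * δ), Real.sin (θ t) ≤ Real.cos (δ - t / r) := by
    intro t ht
    obtain ⟨ht0, htr⟩ := ht
    have hdist : dist (θ 0) (θ t) ≤ t / r := by
      have := hθ.dist_le_mul 0 t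
      have hcoe : ((Real.toNNReal (1 / r) : NNReal) : ℝ) = 1 / r :=
        Real.coe_toNNReal _ (by positivity)
      rw [hcoe, Real.dist_eq, Real.dist_eq, show (0:ℝ) - t = -t by ring, abs_neg, abs_of_nonneg ht0] at this
      calc dist (θ 0) (θ t) = |θ 0 - θ t| := Real.dist_eq _ _
        _ ≤ 1 / r * t := this
        _ = t / r := by ring
    have hlow : δ - t / r ≤ Metric.infDist (θ t) upSet := by
      have := Metric.infDist_le_infDist_add_dist (x := θ 0) (y := θ t) (s := upSet)
      rw [← hδ] at this
      linarith
    refine sin_le_cos_of_infDist _ _ ?_ (by linarith [div_nonneg ht0 hr.le]) hlow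
    rw [sub_nonneg, div_le_iff₀ hr]
    linarith [mul_comm δ r]
  have hint1 : IntervalIntegrable (fun t => Real.sin (θ t)) MeasureTheory.volume 0 (r * δ) :=
    hcontθ.intervalIntegrable _ _
  have hint2 : IntervalIntegrable (fun t => Real.cos (δ - t / r)) MeasureTheory.volume 0 (r * δ) :=
    hcontc.intervalIntegrable _ _
  have h1 : (∫ t in (0:ℝ)..(r * δ), Real.sin (θ t))
      ≤ ∫ t in (0:ℝ)..(r * δ), Real.cos (δ - t / r) :=
    intervalIntegral.integral_mono_on hrδ hint1 hint2 hpt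
  have h2 : (∫ t in (0:ℝ)..(r * δ), Real.cos (δ - t / r)) = r * Real.sin δ := by
    have hderiv : ∀ t ∈ Set.uIcc (0:ℝ) (r * δ),
        HasDerivAt (fun t => -r * Real.sin (δ - t / r)) (Real.cos (δ - t / r)) t := by
      intro t _
      have hinner : HasDerivAt (fun t : ℝ => δ - t / r) (-(1 / r)) t := by
        simpa using ((hasDerivAt_id t).div_const r).const_sub δ
      have := ((Real.hasDerivAt_sin (δ - t / r)).comp t hinner).const_mul (-r)
      refine this.congr_deriv ?_
      have hr0 : r ≠ 0 := hr.ne'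
      rw [show -r * (Real.cos (δ - t / r) * -(1 / r)) = Real.cos (δ - t / r) * (r * (1 / r)) by ring,
        mul_one_div_cancel hr0, mul_one]
    rw [intervalIntegral.integral_eq_sub_of_hasDerivAt hderiv (hcontc.intervalIntegrable _ _)]
    have : δ - r * δ / r = 0 := by field_simp; ring
    rw [this]
    simp
  have hpt2 : ∀ t ∈ Set.Icc (r * δ) s_f, Real.sin (θ t) ≤ (1:ℝ) := fun t _ => Real.sin_le_one _
  have hint3 : IntervalIntegrable (fun t => Real.sin (θ t)) MeasureTheory.volume (r * δ) s_f :=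
    hcontθ.intervalIntegrable _ _
  have h3 : (∫ t in (r * δ)..s_f, Real.sin (θ t)) ≤ s_f - r * δ := by
    have := intervalIntegral.integral_mono_on hsf hint3
      (intervalIntegrable_const (c := (1:ℝ))) hpt2
    simpa using this
  have hsplit : (∫ t in (0:ℝ)..s_f, Real.sin (θ t))
      = (∫ t in (0:ℝ)..(r * δ), Real.sin (θ t)) + ∫ t in (r * δ)..s_f, Real.sin (θ t) :=
    (intervalIntegral.integral_add_adjacent_intervals hint1 hint3).symm
  rw [hsplit]
  linarith
end

section
/- Let r > 0, a ≥ 0, and P_θ ∈ ℝ, and define f(θ) = r·(P_θ − θ) + (a − r·cos θ)/sin θ for θ ∈ (0, π). Then for every θ ∈ (0, π) with r·cos θ ≤ a, f(θ) ≥ f(π/2) = r·(P_θ − π/2) + a. -/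
open Real

lemma auxA {φ : ℝ} (h1 : Real.pi / 2 ≤ φ) (h2 : φ < Real.pi) :
    0 ≤ (Real.pi / 2 - φ) * Real.sin φ - Real.cos φ := by
  have hsin : Real.cos (φ - Real.pi / 2) = Real.sin φ := Real.cos_sub_pi_div_two φ
  have hcos : Real.sin (φ - Real.pi / 2) = -Real.cos φ := Real.sin_sub_pi_div_two φ
  have ht0 : 0 ≤ φ - Real.pi / 2 := by linarith
  have ht2 : φ - Real.pi / 2 < Real.pi / 2 := by linarith
  rcases eq_or_lt_of_le ht0 with h | h
  · have hφ : φ = Real.pi / 2 := by linarith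
    simp [hφ]
  · have htan := Real.lt_tan h ht2
    have hct : 0 < Real.cos (φ - Real.pi / 2) :=
      Real.cos_pos_of_mem_Ioo ⟨by linarith, ht2⟩
    rw [Real.tan_eq_sin_div_cos, lt_div_iff₀ hct] at htan
    nlinarith

lemma auxB {φ : ℝ} (h1 : 0 < φ) (h2 : φ ≤ Real.pi / 2) :
    Real.cos φ ≤ Real.pi / 2 - φ := by
  have := Real.sin_le (x := Real.pi / 2 - φ) (by linarith)
  rwa [Real.sin_pi_div_two_sub] at this

theorem stmt_11 (r a P_θ : ℝ) (hr : 0 < r) (ha : 0 ≤ a) :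
    (∀ φ ∈ Set.Ioo (0 : ℝ) Real.pi, r * Real.cos φ ≤ a →
      r * (P_θ - φ) + (a - r * Real.cos φ) / Real.sin φ ≥
        r * (P_θ - Real.pi / 2) +
          (a - r * Real.cos (Real.pi / 2)) / Real.sin (Real.pi / 2)) ∧
    r * (P_θ - Real.pi / 2) +
        (a - r * Real.cos (Real.pi / 2)) / Real.sin (Real.pi / 2) =
      r * (P_θ - Real.pi / 2) + a := by
  constructor
  · rintro φ ⟨hφ0, hφπ⟩ hca
    rw [Real.cos_pi_div_two, Real.sin_pi_div_two]
    have hs : 0 < Real.sin φ := Real.sin_pos_of_pos_of_lt_pi hφ0 hφπ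
    have hs1 : Real.sin φ ≤ 1 := Real.sin_le_one φ
    have key : 0 ≤ a * (1 - Real.sin φ) + r * (Real.pi / 2 - φ) * Real.sin φ
        - r * Real.cos φ := by
      rcases le_or_gt φ (Real.pi / 2) with h | h
      · have hB := auxB hφ0 h
        nlinarith [mul_nonneg (sub_nonneg.2 hca) (sub_nonneg.2 hs1),
          mul_nonneg (mul_nonneg hr.le hs.le) (sub_nonneg.2 hB)]
      · have hA := auxA h.le hφπ
        nlinarith [mul_nonneg ha (sub_nonneg.2 hs1), mul_nonneg hr.le hA]
    have hdiv : a - r * (Real.pi / 2 - φ) ≤ (a - r * Real.cos φ) / Real.sin φ := by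
      rw [le_div_iff₀ hs]
      nlinarith
    linarith
  · rw [Real.cos_pi_div_two, Real.sin_pi_div_two]; ring
end
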